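/- Let λ = g_k be the multinacci number in (1/2,1), i.e. the root of 1 = Σ_{i=1}^k λ^i, and let 1/2 < μ < g_k. Then every sequence i ∈ {0,1}^ℕ containing neither k consecutive 0's nor k consecutive 1's is the unique expansion of Π_μ(i) = Σ_{n≥1} i_n μ^n in base μ with digits {0,1}. -/

import Mathlib

noncomputable section

def binSeq (i : ℕ → ℕ) : Prop := ∀ n, i n ≤ 1

def piL (l : ℝ) (i : ℕ → ℕ) : ℝ := ∑' n : ℕ, (i n : ℝ) * l ^ (n + 1)

/-- Summability of binary expansions. -/
lemma summ_bin {μ : ℝ} (h0 : 0 ≤ μ) (h1 : μ < 1) (c : ℕ → ℕ) (hc : ∀ m, c m ≤ 1) :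
    Summable (fun m : ℕ => (c m : ℝ) * μ ^ (m + 1)) := by
  apply Summable.of_nonneg_of_le (f := fun m : ℕ => μ ^ (m + 1))
  · intro m; positivity
  · intro m
    have h : (c m : ℝ) ≤ 1 := by exact_mod_cast hc m
    have : (0:ℝ) ≤ μ ^ (m+1) := by positivity
    nlinarith
  · have : Summable (fun m : ℕ => μ ^ m * μ) :=
      (summable_geometric_of_lt_one h0 h1).mul_right μ
    simpa [pow_succ] using this

lemma geo_shift {μ : ℝ} (h0 : 0 ≤ μ) (h1 : μ < 1) :
    ∑' m : ℕ, μ ^ (m + 1) = μ / (1 - μ) := by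
  calc ∑' m : ℕ, μ ^ (m + 1) = ∑' m : ℕ, μ ^ m * μ := by
        apply tsum_congr; intro m; rw [pow_succ]
    _ = (1 - μ)⁻¹ * μ := by rw [tsum_mul_right, tsum_geometric_of_lt_one h0 h1, mul_comm]
    _ = μ / (1 - μ) := by rw [div_eq_inv_mul]

/-- Block lower bound: if in each block of length `k` the binary sequence `c`
takes the value 1 somewhere, then its power series is at least the geometric
series of `μ^k`. -/
lemma blockLB {μ : ℝ} (h0 : 0 < μ) (h1 : μ < 1) {k : ℕ} (hk : 1 ≤ k)
    (c : ℕ → ℕ) (hc : ∀ m, c m ≤ 1)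
    (hb : ∀ t : ℕ, ∃ m, m < k ∧ c (t * k + m) = 1) :
    μ ^ k / (1 - μ ^ k) ≤ ∑' m : ℕ, (c m : ℝ) * μ ^ (m + 1) := by
  choose g hgk hg1 using hb
  set f : ℕ → ℕ := fun t => t * k + g t with hf
  have hflt : ∀ t, f t + 1 ≤ (t + 1) * k := by
    intro t
    have := hgk t
    simp only [hf]
    nlinarith [hgk t]
  have hfmono : StrictMono f := by
    apply strictMono_nat_of_lt_succ
    intro t
    have h1' := hflt t
    have : (t+1) * k ≤ f (t+1) := by simp only [hf]; omega
    omega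
  have hμk1 : μ ^ k < 1 := pow_lt_one₀ h0.le h1 (by omega)
  have hμk0 : 0 < μ ^ k := by positivity
  have hgeo : ∑' t : ℕ, μ ^ ((t + 1) * k) = μ ^ k / (1 - μ ^ k) := by
    calc ∑' t : ℕ, μ ^ ((t + 1) * k) = ∑' t : ℕ, (μ ^ k) ^ t * μ ^ k := by
          apply tsum_congr; intro t
          rw [show (t+1)*k = k*t + k by ring, pow_add, pow_mul]
      _ = (1 - μ ^ k)⁻¹ * μ ^ k := by
          rw [tsum_mul_right, tsum_geometric_of_lt_one hμk0.le hμk1, mul_comm]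
      _ = μ ^ k / (1 - μ ^ k) := by rw [div_eq_inv_mul]
  rw [← hgeo]
  apply Summable.tsum_le_tsum_of_inj f hfmono.injective
  · intro m _; positivity
  · intro t
    rw [hg1 t]
    push_cast
    rw [one_mul]
    exact pow_le_pow_of_le_one h0.le h1.le (hflt t)
  · have : Summable (fun t : ℕ => (μ ^ k) ^ t * μ ^ k) :=
      (summable_geometric_of_lt_one hμk0.le hμk1).mul_right _
    apply Summable.congr this
    intro t
    rw [show (t+1)*k = k*t + k by ring, pow_add, pow_mul]
  · exact summ_bin h0.le h1 c hc

/-- The key numeric inequality for `1/2 < μ < g_k`. -/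
lemma keyineq {k : ℕ} (hk : 2 ≤ k) {gk : ℝ} (hgk1 : gk < 1)
    (hroot : ∑ m ∈ Finset.range k, gk ^ (m + 1) = 1)
    {μ : ℝ} (hμ0 : 1 / 2 < μ) (hμ1 : μ < gk) :
    μ / (1 - μ) < 1 + μ ^ k / (1 - μ ^ k) := by
  have hμpos : 0 < μ := by linarith
  have hμlt1 : μ < 1 := hμ1.trans hgk1
  have h1μ : 0 < 1 - μ := by linarith
  have hu1 : μ ^ k < 1 := pow_lt_one₀ hμpos.le hμlt1 (by omega)
  have hu0 : 0 < μ ^ k := by positivity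
  have h1u : 0 < 1 - μ ^ k := by linarith
  -- the polynomial is < 1 at μ
  have hS : ∑ m ∈ Finset.range k, μ ^ (m + 1) < 1 := by
    rw [← hroot]
    apply Finset.sum_lt_sum_of_nonempty
    · exact ⟨0, by simp; omega⟩
    · intro m _
      exact pow_lt_pow_left₀ hμ1 hμpos.le (by omega)
  set P : ℝ := ∑ m ∈ Finset.range k, μ ^ m with hP
  have hSP : ∑ m ∈ Finset.range k, μ ^ (m + 1) = μ * P := by
    rw [hP, Finset.mul_sum]
    apply Finset.sum_congr rfl
    intro m _
    rw [pow_succ, mul_comm]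
  have hPe : P * (μ - 1) = μ ^ k - 1 := geom_sum_mul μ k
  have hSlt : μ * P < 1 := by rw [← hSP]; exact hS
  -- 1 - 2μ + μ^{k+1} > 0
  have key : 0 < 1 - 2 * μ + μ * μ ^ k := by nlinarith [mul_lt_mul_of_pos_right hSlt h1μ]
  have e1 : 1 + μ ^ k / (1 - μ ^ k) = 1 / (1 - μ ^ k) := by field_simp; ring
  rw [e1, div_lt_div_iff₀ h1μ h1u]
  nlinarith

theorem stmt19 (k : ℕ) (hk : 2 ≤ k) (gk : ℝ) (hgk0 : 1 / 2 < gk) (hgk1 : gk < 1)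
    (hroot : ∑ m ∈ Finset.range k, gk ^ (m + 1) = 1)
    (μ : ℝ) (hμ0 : 1 / 2 < μ) (hμ1 : μ < gk)
    (i : ℕ → ℕ) (hib : binSeq i)
    (h0 : ¬ ∃ n : ℕ, ∀ m < k, i (n + m) = 0)
    (h1 : ¬ ∃ n : ℕ, ∀ m < k, i (n + m) = 1) :
    ∀ j : ℕ → ℕ, binSeq j → piL μ j = piL μ i → j = i := by
  intro j hjb hpij
  by_contra hne
  have hμpos : 0 < μ := by linarith
  have hμlt1 : μ < 1 := hμ1.trans hgk1
  have h1μ : 0 < 1 - μ := by linarith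
  have hμnn : 0 ≤ μ := hμpos.le
  push_neg at h0 h1
  -- run conditions in positive form
  have h0' : ∀ s : ℕ, ∃ m, m < k ∧ i (s + m) = 1 := by
    intro s
    obtain ⟨m, hm, hmne⟩ := h0 s
    exact ⟨m, hm, by have := hib (s + m); omega⟩
  have h1' : ∀ s : ℕ, ∃ m, m < k ∧ i (s + m) = 0 := by
    intro s
    obtain ⟨m, hm, hmne⟩ := h1 s
    exact ⟨m, hm, by have := hib (s + m); omega⟩
  -- minimal disagreement index
  have hex : ∃ n, j n ≠ i n := by
    by_contra h
    push_neg at h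
    exact hne (funext h)
  set n := Nat.find hex with hn
  have hndis : j n ≠ i n := Nat.find_spec hex
  have hmin : ∀ m, m < n → j m = i m := by
    intro m hm
    have := Nat.find_min hex hm
    tauto
  -- summabilities
  have hsi : Summable (fun m : ℕ => (i m : ℝ) * μ ^ (m + 1)) := summ_bin hμnn hμlt1 i hib
  have hsj : Summable (fun m : ℕ => (j m : ℝ) * μ ^ (m + 1)) := summ_bin hμnn hμlt1 j hjb
  -- split at n : tails are equal
  have hsplit_i := Summable.sum_add_tsum_nat_add n hsi
  have hsplit_j := Summable.sum_add_tsum_nat_add n hsj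
  have hfin : ∑ m ∈ Finset.range n, (j m : ℝ) * μ ^ (m + 1)
      = ∑ m ∈ Finset.range n, (i m : ℝ) * μ ^ (m + 1) := by
    apply Finset.sum_congr rfl
    intro m hm
    rw [hmin m (Finset.mem_range.mp hm)]
  have htails : ∑' m : ℕ, (j (m + n) : ℝ) * μ ^ (m + n + 1)
      = ∑' m : ℕ, (i (m + n) : ℝ) * μ ^ (m + n + 1) := by
    have : piL μ j = piL μ i := hpij
    rw [piL, piL] at this
    rw [← hsplit_i, ← hsplit_j, hfin] at this
    linarith
  -- factor out μ^(n+1)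
  have hfac : ∀ x : ℕ → ℕ, ∑' m : ℕ, (x (m + n) : ℝ) * μ ^ (m + n + 1)
      = μ ^ (n + 1) * ∑' m : ℕ, (x (m + n) : ℝ) * μ ^ m := by
    intro x
    rw [← tsum_mul_left]
    apply tsum_congr
    intro m
    rw [show m + n + 1 = (n + 1) + m by omega, pow_add]
    ring
  rw [hfac i, hfac j] at htails
  have hTeq : ∑' m : ℕ, (j (m + n) : ℝ) * μ ^ m = ∑' m : ℕ, (i (m + n) : ℝ) * μ ^ m :=
    mul_left_cancel₀ (pow_ne_zero _ hμpos.ne') htails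
  -- summability of shifted series (exponent m)
  have hsum0 : ∀ (x : ℕ → ℕ), binSeq x → Summable (fun m : ℕ => (x (m + n) : ℝ) * μ ^ m) := by
    intro x hx
    apply Summable.of_nonneg_of_le (f := fun m : ℕ => μ ^ m)
    · intro m; positivity
    · intro m
      have h : (x (m+n) : ℝ) ≤ 1 := by exact_mod_cast hx (m+n)
      have : (0:ℝ) ≤ μ ^ m := by positivity
      nlinarith
    · exact summable_geometric_of_lt_one hμnn hμlt1
  -- peel off the first term
  have hpeel : ∀ (x : ℕ → ℕ), binSeq x →
      ∑' m : ℕ, (x (m + n) : ℝ) * μ ^ m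
      = (x n : ℝ) + ∑' m : ℕ, (x (m + 1 + n) : ℝ) * μ ^ (m + 1) := by
    intro x hx
    rw [Summable.tsum_eq_zero_add (hsum0 x hx)]
    norm_num
  rw [hpeel i hib, hpeel j hjb] at hTeq
  -- The two tail series G i and G j
  set Gi := ∑' m : ℕ, (i (m + 1 + n) : ℝ) * μ ^ (m + 1) with hGi
  set Gj := ∑' m : ℕ, (j (m + 1 + n) : ℝ) * μ ^ (m + 1) with hGj
  have hsGi : Summable (fun m : ℕ => (i (m + 1 + n) : ℝ) * μ ^ (m + 1)) :=
    summ_bin hμnn hμlt1 _ (fun m => hib _)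
  have hsGj : Summable (fun m : ℕ => (j (m + 1 + n) : ℝ) * μ ^ (m + 1)) :=
    summ_bin hμnn hμlt1 _ (fun m => hjb _)
  have hspow : Summable (fun m : ℕ => μ ^ (m + 1)) := by
    have : Summable (fun m : ℕ => μ ^ m * μ) :=
      (summable_geometric_of_lt_one hμnn hμlt1).mul_right μ
    simpa [pow_succ] using this
  -- upper bound for any binary tail
  have hGub : ∀ (x : ℕ → ℕ), binSeq x →
      (∑' m : ℕ, (x (m + 1 + n) : ℝ) * μ ^ (m + 1)) ≤ μ / (1 - μ) := by
    intro x hx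
    rw [← geo_shift hμnn hμlt1]
    apply Summable.tsum_le_tsum _ (summ_bin hμnn hμlt1 _ (fun m => hx _)) hspow
    intro m
    have h : (x (m+1+n) : ℝ) ≤ 1 := by exact_mod_cast hx (m+1+n)
    have : (0:ℝ) ≤ μ ^ (m+1) := by positivity
    nlinarith
  have hGjub : Gj ≤ μ / (1 - μ) := hGub j hjb
  have hμk1 : μ ^ k < 1 := pow_lt_one₀ hμnn hμlt1 (by omega)
  have h1u : 0 < 1 - μ ^ k := by linarith
  -- lower bound for G i (no k consecutive zeros)
  have hGilb : μ ^ k / (1 - μ ^ k) ≤ Gi := by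
    rw [hGi]
    apply blockLB hμpos hμlt1 (by omega) (fun m => i (m + 1 + n)) (fun m => hib _)
    intro t
    obtain ⟨m, hm, hm1⟩ := h0' (n + 1 + t * k)
    refine ⟨m, hm, ?_⟩
    rw [show t * k + m + 1 + n = n + 1 + t * k + m by ring]
    exact hm1
  -- upper bound for G i (no k consecutive ones): Gi ≤ μ/(1-μ) - μ^k/(1-μ^k)
  have hGiub : Gi ≤ μ / (1 - μ) - μ ^ k / (1 - μ ^ k) := by
    set c : ℕ → ℕ := fun m => 1 - i (m + 1 + n) with hc
    have hcb : ∀ m, c m ≤ 1 := fun m => by simp only [hc]; omega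
    have hadd : Gi + ∑' m : ℕ, (c m : ℝ) * μ ^ (m + 1) = μ / (1 - μ) := by
      rw [hGi, ← Summable.tsum_add hsGi (summ_bin hμnn hμlt1 c hcb), ← geo_shift hμnn hμlt1]
      apply tsum_congr
      intro m
      rcases Nat.le_one_iff_eq_zero_or_eq_one.mp (hib (m + 1 + n)) with h | h <;>
        simp [hc, h]
    have hclb : μ ^ k / (1 - μ ^ k) ≤ ∑' m : ℕ, (c m : ℝ) * μ ^ (m + 1) := by
      apply blockLB hμpos hμlt1 (by omega : 1 ≤ k) c hcb
      intro t
      obtain ⟨m, hm, hm0⟩ := h1' (n + 1 + t * k)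
      refine ⟨m, hm, ?_⟩
      simp only [hc]
      rw [show t * k + m + 1 + n = n + 1 + t * k + m by ring, hm0]
    linarith
  -- key inequality
  have hkey : μ / (1 - μ) < 1 + μ ^ k / (1 - μ ^ k) := keyineq hk hgk1 hroot hμ0 hμ1
  -- case analysis on the digits at n
  have hin := hib n
  have hjn := hjb n
  interval_cases hin' : (i n) <;> interval_cases hjn' : (j n)
  · exact hndis (by omega)
  · -- i n = 0, j n = 1 : Gi = 1 + Gj ≥ 1, but Gi < 1
    have hGjnn : 0 ≤ Gj := by
      rw [hGj]
      apply tsum_nonneg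
      intro m; positivity
    push_cast at hTeq
    linarith
  · -- i n = 1, j n = 0 : 1 + Gi = Gj
    push_cast at hTeq
    linarith
  · exact hndis (by omega)
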